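/- For every function u in the Sobolev space H¹(ℝ²), the L⁴ norm satisfies ‖u‖²_{L⁴(ℝ²)} ≤ 2 ‖u‖_{L²(ℝ²)} ‖∇u‖_{L²(ℝ²)}. -/

import Mathlib

open MeasureTheory

lemma line_bound (f f' h : ℝ → ℝ) (hd : ∀ x, HasDerivAt f (f' x) x)
    (hc : Continuous f') (hfi : Integrable f)
    (hh : Integrable h) (hbd : ∀ x, |f' x| ≤ h x) (x : ℝ) :
    f x ≤ ∫ t, h t := by
  have hh0 : ∀ t, 0 ≤ h t := fun t => le_trans (abs_nonneg _) (hbd t)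
  apply le_of_forall_pos_le_add
  intro ε hε
  obtain ⟨t, ht, hft⟩ : ∃ t, t ≤ x ∧ f t < ε := by
    by_contra hcon
    push_neg at hcon
    have h1 : volume {s : ℝ | ε ≤ f s} < ⊤ := hfi.measure_ge_lt_top hε
    have h2 : Set.Iic x ⊆ {s : ℝ | ε ≤ f s} := fun s hs => hcon s hs
    have := (measure_mono h2).trans_lt h1
    simp [Real.volume_Iic] at this
  have key : f x - f t = ∫ s in t..x, f' s :=
    (intervalIntegral.integral_eq_sub_of_hasDerivAt (fun s _ => hd s)
      (hc.intervalIntegrable t x)).symm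
  have h3 : ∫ s in t..x, f' s ≤ ∫ s in t..x, h s :=
    intervalIntegral.integral_mono_on ht (hc.intervalIntegrable t x)
      (hh.intervalIntegrable) (fun s _ => (le_abs_self _).trans (hbd s))
  have h4 : ∫ s in t..x, h s ≤ ∫ s, h s := by
    rw [intervalIntegral.integral_of_le ht]
    exact setIntegral_le_integral hh (Filter.Eventually.of_forall hh0)
  linarith

/-- Ladyzhenskaya inequality on the plane:
`‖u‖²_{L⁴(ℝ²)} ≤ 2 ‖u‖_{L²(ℝ²)} ‖∇u‖_{L²(ℝ²)}`. -/
theorem stmt_1 (u : ℝ × ℝ → ℝ) (hu : ContDiff ℝ 1 u)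
    (h2 : Integrable (fun p => (u p) ^ 2))
    (h4 : Integrable (fun p => (u p) ^ 4))
    (hg : Integrable (fun p => ‖fderiv ℝ u p‖ ^ 2)) :
    (∫ p, (u p) ^ 4) ^ ((1 : ℝ) / 2) ≤
      2 * (∫ p, (u p) ^ 2) ^ ((1 : ℝ) / 2) *
        (∫ p, ‖fderiv ℝ u p‖ ^ 2) ^ ((1 : ℝ) / 2) := by
  have huc : Continuous u := hu.continuous
  have hDc : Continuous fun p => ‖fderiv ℝ u p‖ := (hu.continuous_fderiv one_ne_zero).norm
  set H : ℝ × ℝ → ℝ := fun p => |u p| * ‖fderiv ℝ u p‖ with hHdef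
  have hHc : Continuous H := huc.abs.mul hDc
  have hHnn : ∀ p, 0 ≤ H p := fun p => mul_nonneg (abs_nonneg _) (norm_nonneg _)
  have hHi : Integrable H := by
    refine ((h2.add hg).div_const 2).mono' hHc.aestronglyMeasurable ?_
    refine Filter.Eventually.of_forall fun p => ?_
    rw [Real.norm_of_nonneg (hHnn p)]
    simp only [Pi.add_apply, hHdef]
    nlinarith [sq_nonneg (|u p| - ‖fderiv ℝ u p‖), sq_abs (u p)]
  have hHi' : Integrable H ((volume : Measure ℝ).prod volume) := by
    rwa [← Measure.volume_eq_prod]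
  set F : ℝ → ℝ := fun y => ∫ t, H (t, y) with hFdef
  set G : ℝ → ℝ := fun x => ∫ s, H (x, s) with hGdef
  have hFi : Integrable F := hHi'.integral_prod_right
  have hGi : Integrable G := hHi'.integral_prod_left
  -- derivative along horizontal/vertical lines
  have hderiv1 : ∀ (y t : ℝ), HasDerivAt (fun t => u (t, y)) (fderiv ℝ u (t, y) (1, 0)) t := by
    intro y t
    have h1 : HasDerivAt (fun t : ℝ => ((t : ℝ), y)) ((1 : ℝ), (0 : ℝ)) t :=
      (hasDerivAt_id t).prodMk (hasDerivAt_const t y)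
    exact ((hu.differentiable one_ne_zero (t, y)).hasFDerivAt).comp_hasDerivAt t h1
  have hderiv2 : ∀ (x s : ℝ), HasDerivAt (fun s => u (x, s)) (fderiv ℝ u (x, s) (0, 1)) s := by
    intro x s
    have h1 : HasDerivAt (fun s : ℝ => ((x : ℝ), (s : ℝ))) ((0 : ℝ), (1 : ℝ)) s :=
      (hasDerivAt_const s x).prodMk (hasDerivAt_id s)
    exact ((hu.differentiable one_ne_zero (x, s)).hasFDerivAt).comp_hasDerivAt s h1
  have hnorm10 : ‖((1 : ℝ), (0 : ℝ))‖ = 1 := by simp [Prod.norm_def]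
  have hnorm01 : ‖((0 : ℝ), (1 : ℝ))‖ = 1 := by simp [Prod.norm_def]
  -- key pointwise bounds
  have key1 : ∀ᵐ y : ℝ, ∀ x : ℝ, (u (x, y)) ^ 2 ≤ 2 * F y := by
    have e2 : Integrable (fun p : ℝ × ℝ => (u p) ^ 2) ((volume : Measure ℝ).prod volume) := by
      rwa [← Measure.volume_eq_prod]
    filter_upwards [e2.prod_left_ae, hHi'.prod_left_ae] with y hy1 hy2
    intro x
    have hb := line_bound (fun t => (u (t, y)) ^ 2)
      (fun t => 2 * u (t, y) * (fderiv ℝ u (t, y) (1, 0)))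
      (fun t => 2 * H (t, y))
      (fun t => by simpa using (hderiv1 y t).fun_pow 2)
      (by
        have c1 : Continuous fun t : ℝ => ((t : ℝ), y) := continuous_id.prodMk continuous_const
        exact (continuous_const.mul (huc.comp c1)).mul
          (((hu.continuous_fderiv one_ne_zero).comp c1).clm_apply continuous_const))
      hy1 (hy2.const_mul 2)
      (fun t => by
        have hop := (fderiv ℝ u (t, y)).le_opNorm ((1 : ℝ), (0 : ℝ))
        rw [hnorm10, mul_one] at hop
        have h1 : |fderiv ℝ u (t, y) (1, 0)| ≤ ‖fderiv ℝ u (t, y)‖ := by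
          simpa [Real.norm_eq_abs] using hop
        rw [abs_mul, abs_mul, abs_two]
        simp only [hHdef]
        have := abs_nonneg (u (t, y))
        nlinarith [abs_nonneg (fderiv ℝ u (t, y) (1, 0)), norm_nonneg (fderiv ℝ u (t, y))])
      x
    calc (u (x, y)) ^ 2 ≤ ∫ t, 2 * H (t, y) := hb
      _ = 2 * F y := by rw [integral_const_mul]
  have key2 : ∀ᵐ x : ℝ, ∀ y : ℝ, (u (x, y)) ^ 2 ≤ 2 * G x := by
    have e2 : Integrable (fun p : ℝ × ℝ => (u p) ^ 2) ((volume : Measure ℝ).prod volume) := by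
      rwa [← Measure.volume_eq_prod]
    filter_upwards [e2.prod_right_ae, hHi'.prod_right_ae] with x hx1 hx2
    intro y
    have hb := line_bound (fun s => (u (x, s)) ^ 2)
      (fun s => 2 * u (x, s) * (fderiv ℝ u (x, s) (0, 1)))
      (fun s => 2 * H (x, s))
      (fun s => by simpa using (hderiv2 x s).fun_pow 2)
      (by
        have c1 : Continuous fun s : ℝ => ((x : ℝ), (s : ℝ)) := continuous_const.prodMk continuous_id
        exact (continuous_const.mul (huc.comp c1)).mul
          (((hu.continuous_fderiv one_ne_zero).comp c1).clm_apply continuous_const))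
      hx1 (hx2.const_mul 2)
      (fun s => by
        have hop := (fderiv ℝ u (x, s)).le_opNorm ((0 : ℝ), (1 : ℝ))
        rw [hnorm01, mul_one] at hop
        have h1 : |fderiv ℝ u (x, s) (0, 1)| ≤ ‖fderiv ℝ u (x, s)‖ := by
          simpa [Real.norm_eq_abs] using hop
        rw [abs_mul, abs_mul, abs_two]
        simp only [hHdef]
        have := abs_nonneg (u (x, s))
        nlinarith [abs_nonneg (fderiv ℝ u (x, s) (0, 1)), norm_nonneg (fderiv ℝ u (x, s))])
      y
    calc (u (x, y)) ^ 2 ≤ ∫ s, 2 * H (x, s) := hb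
      _ = 2 * G x := by rw [integral_const_mul]
  -- combine to product a.e. bound
  have keyP : ∀ᵐ p : ℝ × ℝ, (u p) ^ 4 ≤ (2 * G p.1) * (2 * F p.2) := by
    rw [show (volume : Measure (ℝ × ℝ)) = (volume : Measure ℝ).prod volume from Measure.volume_eq_prod ℝ ℝ]
    have k1 : ∀ᵐ p : ℝ × ℝ ∂((volume : Measure ℝ).prod volume), ∀ x, (u (x, p.2)) ^ 2 ≤ 2 * F p.2 :=
      Measure.quasiMeasurePreserving_snd.ae key1
    have k2 : ∀ᵐ p : ℝ × ℝ ∂((volume : Measure ℝ).prod volume), ∀ y, (u (p.1, y)) ^ 2 ≤ 2 * G p.1 :=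
      Measure.quasiMeasurePreserving_fst.ae key2
    filter_upwards [k1, k2] with p h1 h2
    have a1 : (u p) ^ 2 ≤ 2 * F p.2 := by simpa using h1 p.1
    have a2 : (u p) ^ 2 ≤ 2 * G p.1 := by simpa using h2 p.2
    nlinarith [sq_nonneg (u p), sq_nonneg ((u p) ^ 2)]
  -- integrate
  have hRi : Integrable (fun p : ℝ × ℝ => (2 * G p.1) * (2 * F p.2)) := by
    rw [show (volume : Measure (ℝ × ℝ)) = (volume : Measure ℝ).prod volume from Measure.volume_eq_prod ℝ ℝ]
    exact (hGi.const_mul 2).mul_prod (hFi.const_mul 2)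
  have hcomb : ∫ p, (u p) ^ 4 ≤ ∫ p : ℝ × ℝ, (2 * G p.1) * (2 * F p.2) :=
    integral_mono_ae h4 hRi keyP
  have heq : ∫ p : ℝ × ℝ, (2 * G p.1) * (2 * F p.2)
      = 4 * (∫ x, G x) * (∫ y, F y) := by
    rw [show (volume : Measure (ℝ × ℝ)) = (volume : Measure ℝ).prod volume from Measure.volume_eq_prod ℝ ℝ,
      integral_prod_mul (fun x => 2 * G x) (fun y => 2 * F y),
      integral_const_mul, integral_const_mul]
    ring
  have hGH : ∫ x, G x = ∫ p, H p := by
    rw [show (volume : Measure (ℝ × ℝ)) = (volume : Measure ℝ).prod volume from Measure.volume_eq_prod ℝ ℝ]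
    exact integral_integral (f := fun x s => H (x, s)) hHi'
  have hFH : ∫ y, F y = ∫ p, H p := by
    rw [show (volume : Measure (ℝ × ℝ)) = (volume : Measure ℝ).prod volume from Measure.volume_eq_prod ℝ ℝ]
    rw [← integral_integral_swap (f := fun x s => H (x, s)) hHi']
    exact integral_integral (f := fun x s => H (x, s)) hHi'
  have hI4 : ∫ p, (u p) ^ 4 ≤ 4 * (∫ p, H p) * (∫ p, H p) := by
    calc ∫ p, (u p) ^ 4 ≤ _ := hcomb
      _ = 4 * (∫ x, G x) * (∫ y, F y) := heq
      _ = 4 * (∫ p, H p) * (∫ p, H p) := by rw [hGH, hFH]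
  have hIHnn : 0 ≤ ∫ p, H p := integral_nonneg hHnn
  -- Cauchy-Schwarz
  have hmem1 : MemLp (fun p => |u p|) (ENNReal.ofReal 2) volume := by
    rw [show ENNReal.ofReal 2 = 2 by norm_num]
    exact (memLp_two_iff_integrable_sq huc.abs.aestronglyMeasurable).2 (by simpa [sq_abs] using h2)
  have hmem2 : MemLp (fun p => ‖fderiv ℝ u p‖) (ENNReal.ofReal 2) volume := by
    rw [show ENNReal.ofReal 2 = 2 by norm_num]
    exact (memLp_two_iff_integrable_sq hDc.aestronglyMeasurable).2 hg
  have hrp : ∀ x : ℝ, x ^ (2 : ℝ) = x ^ 2 := fun x => by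
    rw [show (2 : ℝ) = ((2 : ℕ) : ℝ) by norm_num, Real.rpow_natCast]
  have hCS : ∫ p, H p ≤ (∫ p, (u p) ^ 2) ^ ((1 : ℝ) / 2) *
      (∫ p, ‖fderiv ℝ u p‖ ^ 2) ^ ((1 : ℝ) / 2) := by
    have := integral_mul_le_Lp_mul_Lq_of_nonneg (μ := volume)
      (Real.HolderConjugate.two_two)
      (Filter.Eventually.of_forall fun p => abs_nonneg (u p))
      (Filter.Eventually.of_forall fun p => norm_nonneg (fderiv ℝ u p)) hmem1 hmem2
    simp_rw [hrp, sq_abs] at this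
    exact this
  have hI4nn : 0 ≤ ∫ p, (u p) ^ 4 := integral_nonneg fun p => by positivity
  calc (∫ p, (u p) ^ 4) ^ ((1 : ℝ) / 2)
      ≤ (4 * (∫ p, H p) * (∫ p, H p)) ^ ((1 : ℝ) / 2) :=
        Real.rpow_le_rpow hI4nn hI4 (by norm_num)
    _ = 2 * (∫ p, H p) := by
        rw [← Real.sqrt_eq_rpow, show 4 * (∫ p, H p) * (∫ p, H p) = (2 * ∫ p, H p) ^ 2 by ring,
          Real.sqrt_sq (by linarith)]
    _ ≤ 2 * ((∫ p, (u p) ^ 2) ^ ((1 : ℝ) / 2) * (∫ p, ‖fderiv ℝ u p‖ ^ 2) ^ ((1 : ℝ) / 2)) := by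
        linarith
    _ = 2 * (∫ p, (u p) ^ 2) ^ ((1 : ℝ) / 2) * (∫ p, ‖fderiv ℝ u p‖ ^ 2) ^ ((1 : ℝ) / 2) := by
        ring
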